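/- Let (α, N, B, κ_g, τ_g) be a Frenet apparatus of a timelike unit speed non-geodesic curve in S³₁ and let p ∈ S³₁ (so ⟨p,p⟩ = 1) satisfy ⟨p, N(s)⟩ = 0 for all s ∈ ℝ. Then there exist constants m₁, m₂ ∈ ℝ with m₂² − m₁² ≤ 1 such that ⟨p, α(s)⟩ = m₁·sinh(s) + m₂·cosh(s) for all s ∈ ℝ. -/

import Mathlib

open Real Matrix

/-- The Minkowski scalar product on `ℝ⁴₁`:
`⟨x,y⟩ = -x₁y₁ + x₂y₂ + x₃y₃ + x₄y₄`. -/
noncomputable def mdot (x y : Fin 4 → ℝ) : ℝ :=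
  -(x 0 * y 0) + x 1 * y 1 + x 2 * y 2 + x 3 * y 3

lemma mdot_symm (x y : Fin 4 → ℝ) : mdot x y = mdot y x := by
  simp only [mdot]; ring

lemma hasDerivAt_mdot (p : Fin 4 → ℝ) {f : ℝ → Fin 4 → ℝ} {f' : Fin 4 → ℝ} {s : ℝ}
    (hf : HasDerivAt f f' s) :
    HasDerivAt (fun t => mdot p (f t)) (mdot p f') s := by
  have h0 := (hasDerivAt_pi.mp hf) 0
  have h1 := (hasDerivAt_pi.mp hf) 1
  have h2 := (hasDerivAt_pi.mp hf) 2
  have h3 := (hasDerivAt_pi.mp hf) 3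
  simp only [mdot]
  exact ((((h0.const_mul (p 0)).neg).add (h1.const_mul (p 1))).add
    (h2.const_mul (p 2))).add (h3.const_mul (p 3))

lemma mdot_add_smul (p x y : Fin 4 → ℝ) (c : ℝ) :
    mdot p (x + c • y) = mdot p x + c * mdot p y := by
  simp only [mdot, Pi.add_apply, Pi.smul_apply, smul_eq_mul]; ring

/-- For a timelike rectifying curve in `S³₁` with respect to `p ∈ S³₁`, the support
function `⟨p, α⟩` is of the form `m₁ sinh s + m₂ cosh s` with `m₂² - m₁² ≤ 1`. -/
theorem support_of_timelike_rectifying_curve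
    (α N B : ℝ → Fin 4 → ℝ) (κg τg : ℝ → ℝ)
    (hαsm : ContDiff ℝ (⊤ : ℕ∞) α) (hNsm : ContDiff ℝ (⊤ : ℕ∞) N)
    (hBsm : ContDiff ℝ (⊤ : ℕ∞) B)
    (hκsm : ContDiff ℝ (⊤ : ℕ∞) κg) (hτsm : ContDiff ℝ (⊤ : ℕ∞) τg)
    (hκpos : ∀ s, 0 < κg s)
    (hα1 : ∀ s, mdot (α s) (α s) = 1)
    (hT1 : ∀ s, mdot (deriv α s) (deriv α s) = -1)
    (hN1 : ∀ s, mdot (N s) (N s) = 1)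
    (hB1 : ∀ s, mdot (B s) (B s) = 1)
    (hαT : ∀ s, mdot (α s) (deriv α s) = 0)
    (hαN : ∀ s, mdot (α s) (N s) = 0)
    (hαB : ∀ s, mdot (α s) (B s) = 0)
    (hTN : ∀ s, mdot (deriv α s) (N s) = 0)
    (hTB : ∀ s, mdot (deriv α s) (B s) = 0)
    (hNB : ∀ s, mdot (N s) (B s) = 0)
    (hF1 : ∀ s, deriv (deriv α) s = α s + κg s • N s)
    (hF2 : ∀ s, deriv N s = κg s • deriv α s + τg s • B s)
    (hF3 : ∀ s, deriv B s = -τg s • N s)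
    (p : Fin 4 → ℝ) (hp : mdot p p = 1)
    (hrect : ∀ s, mdot p (N s) = 0) :
    ∃ m₁ m₂ : ℝ, m₂ ^ 2 - m₁ ^ 2 ≤ 1 ∧
      ∀ s, mdot p (α s) = m₁ * Real.sinh s + m₂ * Real.cosh s := by
  -- differentiability facts
  have hαd : Differentiable ℝ α := hαsm.differentiable (by simp)
  have hTsm : ContDiff ℝ (⊤ : ℕ∞) (deriv α) := (contDiff_infty_iff_deriv.mp hαsm).2
  have hTd : Differentiable ℝ (deriv α) := hTsm.differentiable (by simp)
  -- the support function and its derivative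
  set F : ℝ → ℝ := fun s => mdot p (α s) with hF
  set G : ℝ → ℝ := fun s => mdot p (deriv α s) with hG
  have hdF : ∀ s, HasDerivAt F (G s) s := fun s =>
    hasDerivAt_mdot p (hαd s).hasDerivAt
  have hdG : ∀ s, HasDerivAt G (F s) s := by
    intro s
    have h := hasDerivAt_mdot p (hTd s).hasDerivAt
    have : mdot p (deriv (deriv α) s) = F s := by
      rw [hF1 s, mdot_add_smul, hrect s]; simp [hF]
    rwa [this] at h
  set m₁ : ℝ := G 0 with hm₁
  set m₂ : ℝ := F 0 with hm₂
  refine ⟨m₁, m₂, ?_, ?_⟩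
  · -- the inequality via decomposition of p in the Frenet frame at 0
    set M : Matrix (Fin 4) (Fin 4) ℝ := Matrix.of ![α 0, deriv α 0, N 0, B 0] with hM
    set η : Matrix (Fin 4) (Fin 4) ℝ := Matrix.diagonal ![-1, 1, 1, 1] with hη
    have hentry : ∀ i j, (M * η * Mᵀ) i j = mdot (M i) (M j) := by
      intro i j
      simp [Matrix.mul_apply, Matrix.transpose_apply, Fin.sum_univ_four, hη,
        Matrix.diagonal_apply, mdot]

    have hM0 : M 0 = α 0 := rfl
    have hM1 : M 1 = deriv α 0 := rfl
    have hM2 : M 2 = N 0 := rfl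
    have hM3 : M 3 = B 0 := rfl
    have hMηM : M * η * Mᵀ = Matrix.diagonal ![1, -1, 1, 1] := by
      ext i j
      rw [hentry]
      fin_cases i <;> fin_cases j <;>
        simp [hM0, hM1, hM2, hM3, Matrix.diagonal_apply, hα1 0, hT1 0, hN1 0, hB1 0, hαT 0, hαN 0,
          hαB 0, hTN 0, hTB 0, hNB 0, mdot_symm (deriv α 0) (α 0),
          mdot_symm (N 0) (α 0), mdot_symm (B 0) (α 0), mdot_symm (N 0) (deriv α 0),
          mdot_symm (B 0) (deriv α 0), mdot_symm (B 0) (N 0)]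
    have hdet : M.det ≠ 0 := by
      have h1 : (M * η * Mᵀ).det = (Matrix.diagonal ![(1:ℝ), -1, 1, 1]).det := by
        rw [hMηM]
      rw [Matrix.det_mul, Matrix.det_mul, Matrix.det_transpose, hη,
        Matrix.det_diagonal, Matrix.det_diagonal, Fin.prod_univ_four,
        Fin.prod_univ_four] at h1
      intro h0
      rw [h0] at h1
      norm_num [Matrix.cons_val_two, Matrix.cons_val_three] at h1
    have hdetT : IsUnit (Mᵀ).det := by
      rw [Matrix.det_transpose]
      exact isUnit_iff_ne_zero.mpr hdet
    set c : Fin 4 → ℝ := (Mᵀ)⁻¹.mulVec p with hc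
    have hMc : Mᵀ.mulVec c = p := by
      rw [hc, Matrix.mulVec_mulVec, Matrix.mul_nonsing_inv _ hdetT, Matrix.one_mulVec]
    have hpj : ∀ j, p j = c 0 * α 0 j + c 1 * deriv α 0 j + c 2 * N 0 j + c 3 * B 0 j := by
      intro j
      have h := congrFun hMc j
      rw [← h]
      simp [Matrix.mulVec, dotProduct, Fin.sum_univ_four, hM, Matrix.transpose_apply]
      ring
    have hmd : ∀ x : Fin 4 → ℝ, mdot p x =
        c 0 * mdot (α 0) x + c 1 * mdot (deriv α 0) x + c 2 * mdot (N 0) x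
          + c 3 * mdot (B 0) x := by
      intro x
      simp only [mdot, hpj]
      ring
    have hc0 : mdot p (α 0) = c 0 := by
      rw [hmd, hα1 0, mdot_symm (deriv α 0) (α 0), hαT 0, mdot_symm (N 0) (α 0),
        hαN 0, mdot_symm (B 0) (α 0), hαB 0]
      ring
    have hc1 : mdot p (deriv α 0) = -(c 1) := by
      rw [hmd, hαT 0, hT1 0, mdot_symm (N 0) (deriv α 0), hTN 0,
        mdot_symm (B 0) (deriv α 0), hTB 0]
      ring
    have hc3 : mdot p (B 0) = c 3 := by
      rw [hmd, hαB 0, hTB 0, hNB 0, hB1 0]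
      ring
    have hppc : (1 : ℝ) = c 0 ^ 2 - c 1 ^ 2 + c 3 ^ 2 := by
      have h := hmd p
      rw [hp, mdot_symm (α 0) p, hc0, mdot_symm (deriv α 0) p, hc1,
        mdot_symm (N 0) p, hrect 0, mdot_symm (B 0) p, hc3] at h
      rw [h]; ring
    have hm2c : m₂ = c 0 := hc0
    have hm1c : m₁ = -(c 1) := hc1
    rw [hm2c, hm1c]
    nlinarith [sq_nonneg (c 3)]
  · -- solve the ODE F'' = F
    intro s
    set u : ℝ → ℝ := fun t => F t - (m₁ * Real.sinh t + m₂ * Real.cosh t) with hu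
    set v : ℝ → ℝ := fun t => G t - (m₁ * Real.cosh t + m₂ * Real.sinh t) with hv
    have hdu : ∀ t, HasDerivAt u (v t) t := by
      intro t
      exact (hdF t).sub (((Real.hasDerivAt_sinh t).const_mul m₁).add
        ((Real.hasDerivAt_cosh t).const_mul m₂))
    have hdv : ∀ t, HasDerivAt v (u t) t := by
      intro t
      exact (hdG t).sub (((Real.hasDerivAt_cosh t).const_mul m₁).add
        ((Real.hasDerivAt_sinh t).const_mul m₂))
    have hu0 : u 0 = 0 := by simp [hu, hm₂]
    have hv0 : v 0 = 0 := by simp [hv, hm₁]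
    -- w = (u+v) e^{-t} is constant
    have hw : ∀ t, u t + v t = 0 := by
      intro t
      have hdw : ∀ r, HasDerivAt (fun t => (u t + v t) * Real.exp (-t)) 0 r := by
        intro r
        have h1 : HasDerivAt (fun t => u t + v t) (v r + u r) r := (hdu r).add (hdv r)
        have h2 : HasDerivAt (fun t => Real.exp (-t)) (-Real.exp (-r)) r := by
          simpa [Function.comp_def] using ((Real.hasDerivAt_exp (-r)).comp r ((hasDerivAt_id r).neg))
        have : HasDerivAt (fun t => (u t + v t) * Real.exp (-t))
            ((v r + u r) * Real.exp (-r) + (u r + v r) * -Real.exp (-r)) r := h1.mul h2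
        convert this using 1
        ring
      have hconst := is_const_of_deriv_eq_zero (fun t => (hdw t).differentiableAt)
        (fun t => (hdw t).deriv) t 0
      have he : Real.exp (-t) ≠ 0 := Real.exp_ne_zero _
      have : (u t + v t) * Real.exp (-t) = 0 := by
        rw [hconst]; simp [hu0, hv0]
      exact (mul_eq_zero.mp this).resolve_right he
    -- z = u e^{t} is constant
    have hz : u s = 0 := by
      have hdz : ∀ r, HasDerivAt (fun t => u t * Real.exp t) 0 r := by
        intro r
        have : HasDerivAt (fun t => u t * Real.exp t) (v r * Real.exp r + u r * Real.exp r) r :=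
          (hdu r).mul (Real.hasDerivAt_exp r)
        convert this using 1
        linear_combination (-Real.exp r) * hw r
      have hconst := is_const_of_deriv_eq_zero (fun t => (hdz t).differentiableAt)
        (fun t => (hdz t).deriv) s 0
      have he : Real.exp s ≠ 0 := Real.exp_ne_zero _
      have : u s * Real.exp s = 0 := by
        rw [hconst]; simp [hu0]
      exact (mul_eq_zero.mp this).resolve_right he
    have h3 : mdot p (α s) - (m₁ * Real.sinh s + m₂ * Real.cosh s) = 0 := hz
    linarith
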